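/- Robust representation of the Gain-to-Loss Ratio: for every X ∈ L¹(Ω, F, P), GLR(X) = inf { (esssup Z)/(essinf Z) − 1 : Z ∈ L^∞(Ω, F, P), essinf Z > 0, E[Z·X] < 0 }, where the infimum over the empty set is +∞ and the equality holds in [0, ∞]. (This identity expresses that the unique minimal risk function of GLR is R(Z, s) = +∞ for s ≥ 0 and R(Z, s) = (esssup Z)/(essinf Z) − 1 for −∞ < s < 0.) -/

import Mathlib

open MeasureTheory Filter
open scoped ENNReal

variable {Ω : Type*} {m0 : MeasurableSpace Ω}

section Helpers

variable {P : Measure Ω}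

lemma memtop_bound {Z : Ω → ℝ} (hZ : MemLp Z ⊤ P) :
    ∃ C : ℝ, ∀ᵐ ω ∂P, |Z ω| ≤ C := by
  refine ⟨(eLpNormEssSup Z P).toReal, ?_⟩
  have hlt : eLpNormEssSup Z P ≠ ⊤ := by
    have := hZ.eLpNorm_ne_top
    rwa [eLpNorm_exponent_top] at this
  filter_upwards [enorm_ae_le_eLpNormEssSup Z P] with ω hω
  rw [← Real.norm_eq_abs, ← toReal_enorm (Z ω)]
  exact ENNReal.toReal_mono hlt hω

lemma bdd_le' {Z : Ω → ℝ} {C : ℝ} (h : ∀ᵐ ω ∂P, |Z ω| ≤ C) :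
    IsBoundedUnder (· ≤ ·) (ae P) Z :=
  ⟨C, eventually_map.2 <| h.mono fun _ hω => (abs_le.1 hω).2⟩

lemma bdd_ge' {Z : Ω → ℝ} {C : ℝ} (h : ∀ᵐ ω ∂P, |Z ω| ≤ C) :
    IsBoundedUnder (· ≥ ·) (ae P) Z :=
  ⟨-C, eventually_map.2 <| h.mono fun _ hω => (abs_le.1 hω).1⟩

lemma support_max_eq (X : Ω → ℝ) :
    Function.support (fun ω => max (X ω) 0) = {ω | 0 < X ω} := by
  ext ω
  simp only [Function.mem_support, Set.mem_setOf_eq, ne_eq]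
  constructor
  · intro h
    by_contra hx
    exact h (max_eq_right (not_lt.1 hx))
  · intro h hm
    rw [max_eq_left h.le] at hm
    exact h.ne' hm

lemma meas_pos_of_pos_part (X : Ω → ℝ) (hX : Integrable X P)
    (h : 0 < ∫ ω, max (X ω) 0 ∂P) : P {ω | 0 < X ω} ≠ 0 := by
  have h2 := (integral_pos_iff_support_of_nonneg_ae (f := fun ω => max (X ω) 0)
        (Eventually.of_forall fun ω => le_max_right _ _) hX.pos_part).1 h
  rw [support_max_eq] at h2
  exact h2.ne'

lemma meas_pos_of_neg_part (X : Ω → ℝ) (hX : Integrable X P)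
    (h : 0 < ∫ ω, max (-X ω) 0 ∂P) : P {ω | ¬ 0 < X ω} ≠ 0 := by
  have h2 := (integral_pos_iff_support_of_nonneg_ae (f := fun ω => max (-X ω) 0)
        (Eventually.of_forall fun ω => le_max_right _ _) hX.neg_part).1 h
  rw [support_max_eq (fun ω => -X ω)] at h2
  intro h0
  refine h2.ne' (measure_mono_null (fun ω hω => ?_) h0)
  simp only [Set.mem_setOf_eq] at hω ⊢
  intro hx
  linarith

variable [IsProbabilityMeasure P]

lemma twoval (X : Ω → ℝ) (hX : Integrable X P) (s t : ℝ) (hs : 0 < s) (ht : 0 < t)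
    (hpos : P {ω | 0 < X ω} ≠ 0) (hneg : P {ω | ¬ 0 < X ω} ≠ 0) :
    ∃ Z : Ω → ℝ, MemLp Z ⊤ P ∧ essInf Z P = min s t ∧ essSup Z P = max s t ∧
      ∫ ω, Z ω * X ω ∂P = s * ∫ ω, max (X ω) 0 ∂P - t * ∫ ω, max (-X ω) 0 ∂P := by
  classical
  refine ⟨fun ω => if 0 < X ω then s else t, ?_, ?_, ?_, ?_⟩
  case refine_1 =>
    have hg : Measurable (fun x : ℝ => if 0 < x then s else t) :=
      Measurable.ite (measurableSet_lt measurable_const measurable_id)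
        measurable_const measurable_const
    refine memLp_top_of_bound
      (hg.comp_aemeasurable hX.aemeasurable).aestronglyMeasurable (max s t) ?_
    refine Eventually.of_forall fun ω => ?_
    by_cases h : 0 < X ω <;>
      simp [h, Real.norm_eq_abs, abs_of_pos hs, abs_of_pos ht, le_max_left, le_max_right]
  case refine_4 =>
    have key : ∀ ω, (if 0 < X ω then s else t) * X ω
        = s * max (X ω) 0 - t * max (-X ω) 0 := by
      intro ω
      by_cases h : 0 < X ω
      · rw [if_pos h, max_eq_left h.le, max_eq_right (by linarith : -X ω ≤ 0)]
        ring
      · push_neg at h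
        rw [if_neg (not_lt.2 h), max_eq_right h, max_eq_left (by linarith : 0 ≤ -X ω)]
        ring
    simp_rw [key]
    rw [integral_sub ((hX.pos_part).const_mul s) ((hX.neg_part).const_mul t),
      integral_const_mul, integral_const_mul]
  case refine_2 =>
    have hlb : ∀ ω, min s t ≤ (if 0 < X ω then s else t) := fun ω => by
      by_cases h : 0 < X ω <;> simp [h, min_le_left, min_le_right]
    have hub : ∀ ω, (if 0 < X ω then s else t) ≤ max s t := fun ω => by
      by_cases h : 0 < X ω <;> simp [h, le_max_left, le_max_right]
    refine le_antisymm ?_ ?_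
    · refine le_min ?_ ?_
      · refine liminf_le_of_frequently_le (frequently_ae_iff.2 ?_)
          ⟨min s t, eventually_map.2 (Eventually.of_forall hlb)⟩
        refine fun h0 => hpos (measure_mono_null (fun ω hω => ?_) h0)
        simp only [Set.mem_setOf_eq] at hω ⊢
        rw [if_pos hω]
      · refine liminf_le_of_frequently_le (frequently_ae_iff.2 ?_)
          ⟨min s t, eventually_map.2 (Eventually.of_forall hlb)⟩
        refine fun h0 => hneg (measure_mono_null (fun ω hω => ?_) h0)
        simp only [Set.mem_setOf_eq] at hω ⊢
        rw [if_neg hω]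
    · exact le_liminf_of_le
        (isCoboundedUnder_ge_of_eventually_le _ (Eventually.of_forall hub))
        (Eventually.of_forall hlb)
  case refine_3 =>
    have hlb : ∀ ω, min s t ≤ (if 0 < X ω then s else t) := fun ω => by
      by_cases h : 0 < X ω <;> simp [h, min_le_left, min_le_right]
    have hub : ∀ ω, (if 0 < X ω then s else t) ≤ max s t := fun ω => by
      by_cases h : 0 < X ω <;> simp [h, le_max_left, le_max_right]
    refine le_antisymm ?_ ?_
    · exact limsup_le_of_le
        (isCoboundedUnder_le_of_eventually_le _ (Eventually.of_forall hlb))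
        (Eventually.of_forall hub)
    · refine max_le ?_ ?_
      · refine le_limsup_of_frequently_le (frequently_ae_iff.2 ?_)
          ⟨max s t, eventually_map.2 (Eventually.of_forall hub)⟩
        refine fun h0 => hpos (measure_mono_null (fun ω hω => ?_) h0)
        simp only [Set.mem_setOf_eq] at hω ⊢
        rw [if_pos hω]
      · refine le_limsup_of_frequently_le (frequently_ae_iff.2 ?_)
          ⟨max s t, eventually_map.2 (Eventually.of_forall hub)⟩
        refine fun h0 => hneg (measure_mono_null (fun ω hω => ?_) h0)
        simp only [Set.mem_setOf_eq] at hω ⊢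
        rw [if_neg hω]

end Helpers

open Classical in
/-- The (static) Gain-to-Loss Ratio: `GLR(X) = E[X]/E[X⁻]` if `E[X] > 0` (with `c/0 = ∞`
for `c > 0`), `GLR(X) = +∞` if `X = 0` `P`-a.s., and `GLR(X) = 0` otherwise. -/
noncomputable def GLR (P : Measure Ω) (X : Ω → ℝ) : ℝ≥0∞ :=
  if 0 < ∫ ω, X ω ∂P then
    ENNReal.ofReal (∫ ω, X ω ∂P) / ENNReal.ofReal (∫ ω, max (-X ω) 0 ∂P)
  else if X =ᵐ[P] (fun _ => 0) then ⊤
  else 0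

/-- Robust representation of the Gain-to-Loss Ratio: for every `X ∈ L¹`,
`GLR(X) = inf { esssup Z / essinf Z - 1 : Z ∈ L^∞, essinf Z > 0, E[Z·X] < 0 }`,
the infimum over the empty set being `+∞` and the equality holding in `[0,∞]`. -/
theorem GLR_robust_representation (P : Measure Ω) [IsProbabilityMeasure P]
    (X : Ω → ℝ) (hX : Integrable X P) :
    GLR P X = ⨅ (Z : Ω → ℝ) (_ : MemLp Z ⊤ P) (_ : 0 < essInf Z P)
        (_ : ∫ ω, Z ω * X ω ∂P < 0),
      ENNReal.ofReal (essSup Z P / essInf Z P - 1) := by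
  classical
  have hIposnn : 0 ≤ ∫ ω, max (X ω) 0 ∂P := integral_nonneg fun ω => le_max_right _ _
  have hInegnn : 0 ≤ ∫ ω, max (-X ω) 0 ∂P := integral_nonneg fun ω => le_max_right _ _
  have hsplit : ∫ ω, X ω ∂P = (∫ ω, max (X ω) 0 ∂P) - ∫ ω, max (-X ω) 0 ∂P := by
    have := integral_eq_integral_pos_part_sub_integral_neg_part hX
    simpa [Real.coe_toNNReal'] using this
  set Ipos := ∫ ω, max (X ω) 0 ∂P with hIposd
  set Ineg := ∫ ω, max (-X ω) 0 ∂P with hInegd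
  by_cases h1 : 0 < ∫ ω, X ω ∂P
  · by_cases h2 : 0 < Ineg
    · -- case A2 : E[X] > 0, E[X⁻] > 0
      have hIneg_ne : Ineg ≠ 0 := h2.ne'
      have hGLR : GLR P X = ENNReal.ofReal (Ipos / Ineg - 1) := by
        rw [GLR, if_pos h1, ← ENNReal.ofReal_div_of_pos h2, hsplit, sub_div,
          div_self hIneg_ne]
      rw [hGLR]
      have hIpos_pos : 0 < Ipos := by linarith
      refine le_antisymm ?_ ?_
      · refine le_iInf fun Z => le_iInf fun hZ => le_iInf fun ha => le_iInf fun hint => ?_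
        obtain ⟨C, hC⟩ := memtop_bound hZ
        have hZub : ∀ᵐ ω ∂P, Z ω ≤ essSup Z P := ae_le_essSup (bdd_le' hC)
        have hZlb : ∀ᵐ ω ∂P, essInf Z P ≤ Z ω := ae_essInf_le (bdd_ge' hC)
        have hCnorm : ∀ᵐ ω ∂P, ‖Z ω‖ ≤ C := by
          filter_upwards [hC] with ω h; rwa [Real.norm_eq_abs]
        have hint1 : Integrable (fun ω => Z ω * max (X ω) 0) P :=
          hX.pos_part.bdd_mul hZ.aestronglyMeasurable hCnorm
        have hint2 : Integrable (fun ω => Z ω * max (-X ω) 0) P :=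
          hX.neg_part.bdd_mul hZ.aestronglyMeasurable hCnorm
        have hZXeq : ∫ ω, Z ω * X ω ∂P
            = (∫ ω, Z ω * max (X ω) 0 ∂P) - ∫ ω, Z ω * max (-X ω) 0 ∂P := by
          rw [← integral_sub hint1 hint2]
          refine integral_congr_ae (Eventually.of_forall fun ω => ?_)
          have hm : max (X ω) 0 - max (-X ω) 0 = X ω := by
            rcases le_or_gt (X ω) 0 with h | h
            · rw [max_eq_right h, max_eq_left (by linarith)]; ring
            · rw [max_eq_left h.le, max_eq_right (by linarith)]; ring
          calc Z ω * X ω = Z ω * (max (X ω) 0 - max (-X ω) 0) := by rw [hm]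
            _ = Z ω * max (X ω) 0 - Z ω * max (-X ω) 0 := by ring
        have hA : essInf Z P * Ipos ≤ ∫ ω, Z ω * max (X ω) 0 ∂P := by
          rw [hIposd, ← integral_const_mul]
          exact integral_mono_ae (hX.pos_part.const_mul _) hint1
            (by filter_upwards [hZlb] with ω h
                exact mul_le_mul_of_nonneg_right h (le_max_right _ _))
        have hB : ∫ ω, Z ω * max (-X ω) 0 ∂P ≤ essSup Z P * Ineg := by
          rw [hInegd, ← integral_const_mul]
          exact integral_mono_ae hint2 (hX.neg_part.const_mul _)
            (by filter_upwards [hZub] with ω h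
                exact mul_le_mul_of_nonneg_right h (le_max_right _ _))
        have hkey : essInf Z P * Ipos < essSup Z P * Ineg := by
          rw [hZXeq] at hint; linarith
        refine ENNReal.ofReal_le_ofReal ?_
        have hdiv : Ipos / Ineg ≤ essSup Z P / essInf Z P := by
          rw [div_le_div_iff₀ h2 ha]
          nlinarith
        linarith
      · refine ENNReal.le_of_forall_pos_le_add fun ε hε _ => ?_
        have hδpos : 0 < (ε : ℝ) := hε
        have ht1 : 1 ≤ Ipos / Ineg := (one_le_div h2).2 (by linarith)
        obtain ⟨Z, hmem, hinf, hsup, hintg⟩ := twoval X hX 1 (Ipos / Ineg + ε)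
          one_pos (by linarith) (meas_pos_of_pos_part X hX hIpos_pos)
          (meas_pos_of_neg_part X hX h2)
        rw [← hIposd, ← hInegd] at hintg
        have hmin : min 1 (Ipos / Ineg + ε) = 1 := min_eq_left (by linarith)
        have hmax : max 1 (Ipos / Ineg + ε) = Ipos / Ineg + ε := max_eq_right (by linarith)
        have hcancel : Ipos / Ineg * Ineg = Ipos := div_mul_cancel₀ _ hIneg_ne
        have hintlt : ∫ ω, Z ω * X ω ∂P < 0 := by
          rw [hintg]; nlinarith
        refine le_trans (b := ENNReal.ofReal (essSup Z P / essInf Z P - 1)) ?_ ?_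
        · exact iInf_le_of_le Z (iInf_le_of_le hmem
            (iInf_le_of_le (by rw [hinf, hmin]; norm_num)
              (iInf_le_of_le hintlt le_rfl)))
        rw [hsup, hmax, hinf, hmin, div_one]
        calc ENNReal.ofReal (Ipos / Ineg + ε - 1)
            = ENNReal.ofReal ((Ipos / Ineg - 1) + ε) := by ring_nf
          _ ≤ ENNReal.ofReal (Ipos / Ineg - 1) + ENNReal.ofReal ε := ENNReal.ofReal_add_le
          _ = ENNReal.ofReal (Ipos / Ineg - 1) + ε := by rw [ENNReal.ofReal_coe_nnreal]
    · -- case A1 : E[X] > 0, E[X⁻] = 0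
      have hIneg0 : Ineg = 0 := le_antisymm (not_lt.1 h2) hInegnn
      have hXpos : ∀ᵐ ω ∂P, 0 ≤ X ω := by
        have h0 := (integral_eq_zero_iff_of_nonneg_ae (f := fun ω => max (-X ω) 0)
          (Eventually.of_forall fun ω => le_max_right _ _) hX.neg_part).1 hIneg0
        filter_upwards [h0] with ω hω
        by_contra hx
        push_neg at hx
        rw [Pi.zero_apply, max_eq_left (by linarith : (0:ℝ) ≤ -X ω)] at hω
        linarith
      rw [GLR, if_pos h1, ← hInegd, hIneg0, ENNReal.ofReal_zero,
        ENNReal.div_zero (ENNReal.ofReal_pos.2 h1).ne']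
      refine Eq.symm ?_
      simp only [iInf_eq_top]
      intro Z hZ ha hint
      exfalso
      obtain ⟨C, hC⟩ := memtop_bound hZ
      have hZpos : ∀ᵐ ω ∂P, 0 < Z ω := ae_lt_of_lt_essInf ha (bdd_ge' hC)
      have : 0 ≤ ∫ ω, Z ω * X ω ∂P := integral_nonneg_of_ae (by
        filter_upwards [hZpos, hXpos] with ω hz hx
        exact mul_nonneg hz.le hx)
      exact absurd hint (not_lt.2 this)
  · by_cases h2 : X =ᵐ[P] (fun _ => 0)
    · -- case B
      rw [GLR, if_neg h1, if_pos h2]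
      refine Eq.symm ?_
      simp only [iInf_eq_top]
      intro Z hZ ha hint
      exfalso
      have h0 : ∫ ω, Z ω * X ω ∂P = 0 := by
        rw [integral_congr_ae (g := fun _ => (0:ℝ))
          (by filter_upwards [h2] with ω hω; simp [hω]), integral_zero]
      rw [h0] at hint
      exact lt_irrefl 0 hint
    · -- case C
      rw [GLR, if_neg h1, if_neg h2]
      refine Eq.symm ?_
      by_cases h3 : ∫ ω, X ω ∂P < 0
      · refine le_antisymm ?_ zero_le
        have hmem : MemLp (fun _ : Ω => (1:ℝ)) ⊤ P :=
          memLp_top_of_bound aestronglyMeasurable_const 1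
            (Eventually.of_forall fun ω => by simp)
        have hinf : essInf (fun _ : Ω => (1:ℝ)) P = 1 := essInf_const' 1
        have hsup : essSup (fun _ : Ω => (1:ℝ)) P = 1 := essSup_const' 1
        have hint : ∫ ω, (fun _ : Ω => (1:ℝ)) ω * X ω ∂P < 0 := by simpa using h3
        refine le_trans (b := ENNReal.ofReal
          (essSup (fun _ : Ω => (1:ℝ)) P / essInf (fun _ : Ω => (1:ℝ)) P - 1)) ?_ ?_
        · exact iInf_le_of_le (fun _ : Ω => (1:ℝ)) (iInf_le_of_le hmem
            (iInf_le_of_le (by rw [hinf]; norm_num) (iInf_le_of_le hint le_rfl)))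
        rw [hsup, hinf]
        simp
      · have hI0 : ∫ ω, X ω ∂P = 0 := le_antisymm (not_lt.1 h1) (not_lt.1 h3)
        have hIpos_pos : 0 < Ipos := by
          rcases lt_or_eq_of_le hIposnn with h | h
          · exact h
          · exfalso
            apply h2
            have hIneg0 : Ineg = 0 := by linarith
            have hp := (integral_eq_zero_iff_of_nonneg_ae (f := fun ω => max (X ω) 0)
              (Eventually.of_forall fun ω => le_max_right _ _) hX.pos_part).1 h.symm
            have hn := (integral_eq_zero_iff_of_nonneg_ae (f := fun ω => max (-X ω) 0)
              (Eventually.of_forall fun ω => le_max_right _ _) hX.neg_part).1 hIneg0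
            filter_upwards [hp, hn] with ω hpω hnω
            simp only [Pi.zero_apply] at hpω hnω
            have h1' : X ω ≤ 0 := by
              by_contra hx; push_neg at hx
              rw [max_eq_left hx.le] at hpω; linarith
            have h2' : 0 ≤ X ω := by
              by_contra hx; push_neg at hx
              rw [max_eq_left (by linarith : (0:ℝ) ≤ -X ω)] at hnω; linarith
            exact le_antisymm h1' h2'
        have hIneg_pos : 0 < Ineg := by linarith
        refine le_antisymm ?_ zero_le
        refine ENNReal.le_of_forall_pos_le_add fun ε hε _ => ?_
        have hδpos : 0 < (ε : ℝ) := hε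
        have hspos : 0 < 1 / (1 + (ε:ℝ)) := by positivity
        obtain ⟨Z, hmem, hinf, hsup, hintg⟩ := twoval X hX (1 / (1 + (ε:ℝ))) 1
          hspos one_pos (meas_pos_of_pos_part X hX hIpos_pos)
          (meas_pos_of_neg_part X hX hIneg_pos)
        rw [← hIposd, ← hInegd] at hintg
        have hs1 : 1 / (1 + (ε:ℝ)) < 1 := by
          rw [div_lt_one (by positivity)]; linarith
        have hmin : min (1 / (1 + (ε:ℝ))) 1 = 1 / (1 + (ε:ℝ)) := min_eq_left hs1.le
        have hmax : max (1 / (1 + (ε:ℝ))) 1 = 1 := max_eq_right hs1.le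
        have hintlt : ∫ ω, Z ω * X ω ∂P < 0 := by
          rw [hintg]; nlinarith
        refine le_trans (b := ENNReal.ofReal (essSup Z P / essInf Z P - 1)) ?_ ?_
        · exact iInf_le_of_le Z (iInf_le_of_le hmem
            (iInf_le_of_le (by rw [hinf, hmin]; positivity)
              (iInf_le_of_le hintlt le_rfl)))
        rw [hsup, hmax, hinf, hmin]
        have heq : (1:ℝ) / (1 / (1 + (ε:ℝ))) - 1 = (ε:ℝ) := by
          rw [one_div_one_div]; ring
        rw [heq, zero_add, ENNReal.ofReal_coe_nnreal]
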